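/- For all positive integers m and n, the zero forcing number and the 1-leaky forcing number of the Hopi rectangle graph HD(m,n) are equal, and both equal m + n, i.e., Z(HD(m,n)) = Z_{(1)}(HD(m,n)) = m + n. -/

import Mathlib

/-- One round of the zero forcing color change rule, where vertices in the
leak set `L` are not permitted to force. A blue vertex `u ∉ L` with exactly one
non-blue neighbor `v` turns `v` blue. -/
def zfStep {V : Type*} (G : SimpleGraph V) (L : Set V) (B : Set V) : Set V :=
  B ∪ {v | ∃ u ∈ B, u ∉ L ∧ G.Adj u v ∧ ∀ w, G.Adj u w → w ∉ B → w = v}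

/-- The set of vertices eventually colored blue starting from `B`, with leaks `L`. -/
def zfClosure {V : Type*} (G : SimpleGraph V) (L : Set V) (B : Set V) : Set V :=
  ⋃ k, (zfStep G L)^[k] B

/-- `B` is an `ℓ`-leaky forcing set: for every leak set of size at most `ℓ`,
starting with exactly `B` blue, eventually every vertex becomes blue. -/
def IsLeakyForcingSet {V : Type*} (G : SimpleGraph V) (ℓ : ℕ) (B : Set V) : Prop :=
  ∀ L : Set V, L.ncard ≤ ℓ → zfClosure G L B = Set.univ

/-- `B` is a zero forcing set (no leaks). -/
def IsZeroForcingSet {V : Type*} (G : SimpleGraph V) (B : Set V) : Prop :=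
  zfClosure G (∅ : Set V) B = Set.univ

/-- The zero forcing number `Z(G)`: minimum cardinality of a zero forcing set. -/
noncomputable def zfNumber {V : Type*} (G : SimpleGraph V) : ℕ :=
  sInf (Set.ncard '' {B : Set V | IsZeroForcingSet G B})

/-- The `ℓ`-leaky forcing number `Z_(ℓ)(G)`: minimum cardinality of an
`ℓ`-leaky forcing set. -/
noncomputable def leakyNumber {V : Type*} (G : SimpleGraph V) (ℓ : ℕ) : ℕ :=
  sInf (Set.ncard '' {B : Set V | IsLeakyForcingSet G ℓ B})

/-- The vertex set of the Hopi rectangle graph of order `(m,n)`: the set of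
integer lattice points `(i,j)` with `m-1 ≤ i+j ≤ 2n+m-1` and `|i-j| ≤ m`
(realized as a `Finset` by filtering a sufficiently large box). -/
noncomputable def HDverts (m n : ℕ) : Finset (ℤ × ℤ) :=
  (Finset.Icc (-2 : ℤ) (2*n + 2*m) ×ˢ Finset.Icc (-2 : ℤ) (2*n + 2*m)).filter
    (fun p => (m : ℤ) - 1 ≤ p.1 + p.2 ∧ p.1 + p.2 ≤ 2*n + m - 1 ∧ |p.1 - p.2| ≤ m)

/-- The Hopi rectangle graph `HD(m,n)`: vertices are the points of `HDverts m n`,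
and `(i,j)` is adjacent to `(i',j')` iff `|i - i'| + |j - j'| = 1`. -/
def HD (m n : ℕ) : SimpleGraph {p : ℤ × ℤ // p ∈ HDverts m n} where
  Adj u v := |u.val.1 - v.val.1| + |u.val.2 - v.val.2| = 1
  symm := by
    constructor
    intro u v h
    beta_reduce at h ⊢
    rw [abs_sub_comm v.val.1 u.val.1, abs_sub_comm v.val.2 u.val.2]
    exact h
  loopless := by constructor; intro u h; simp at h

section Generic
variable {V : Type*} (G : SimpleGraph V) (L B : Set V)

/-- Inductive characterization of the forced vertices. -/
inductive Forced : V → Prop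
  | base {v : V} : v ∈ B → Forced v
  | force {u v : V} : Forced u → u ∉ L → G.Adj u v →
      (∀ w, G.Adj u w → w ≠ v → Forced w) → Forced v

variable {G L B}

lemma subset_zfStep : B ⊆ zfStep G L B := Set.subset_union_left

lemma iterate_zfStep_mono {k l : ℕ} (h : k ≤ l) :
    (zfStep G L)^[k] B ⊆ (zfStep G L)^[l] B := by
  obtain ⟨d, rfl⟩ := Nat.exists_eq_add_of_le h
  clear h
  induction d with
  | zero => simp
  | succ d ih =>
    have heq : (zfStep G L)^[k + (d+1)] B = zfStep G L ((zfStep G L)^[k+d] B) := by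
      rw [← Function.iterate_succ_apply' (zfStep G L) (k+d) B]
      rfl
    rw [heq]
    exact ih.trans subset_zfStep

lemma mem_zfClosure_iff {v : V} : v ∈ zfClosure G L B ↔ ∃ k, v ∈ (zfStep G L)^[k] B := by
  simp [zfClosure]

lemma forced_mem_zfClosure [Fintype V] {v : V} (h : Forced G L B v) :
    v ∈ zfClosure G L B := by
  induction h with
  | base hv => exact mem_zfClosure_iff.mpr ⟨0, hv⟩
  | @force u v hu huL hadj hnb ihu ihn =>
    classical
    -- stage function
    let sk : V → ℕ := fun w =>
      if h : w ∈ zfClosure G L B then (mem_zfClosure_iff.mp h).choose else 0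
    have hsk : ∀ w, w ∈ zfClosure G L B → w ∈ (zfStep G L)^[sk w] B := by
      intro w hw
      simp only [sk, dif_pos hw]
      exact (mem_zfClosure_iff.mp hw).choose_spec
    let K : ℕ := Finset.univ.sup sk
    have hK : ∀ w, w ∈ zfClosure G L B → w ∈ (zfStep G L)^[K] B := fun w hw =>
      iterate_zfStep_mono (Finset.le_sup (Finset.mem_univ w)) (hsk w hw)
    refine mem_zfClosure_iff.mpr ⟨K + 1, ?_⟩
    rw [Function.iterate_succ_apply']
    refine Set.mem_union_right _ ⟨u, hK u ihu, huL, hadj, ?_⟩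
    intro w hw hwmem
    by_contra hne
    exact hwmem (hK w (ihn w hw hne))

lemma zfClosure_eq_univ_of_forced [Fintype V] (h : ∀ v, Forced G L B v) :
    zfClosure G L B = Set.univ :=
  Set.eq_univ_of_forall fun v => forced_mem_zfClosure (h v)

lemma Forced.anti {L' : Set V} (hL : L ⊆ L') {v : V} (h : Forced G L' B v) :
    Forced G L B v := by
  induction h with
  | base hv => exact Forced.base hv
  | force hu huL hadj hnb ihu ihn =>
    exact Forced.force ihu (fun hc => huL (hL hc)) hadj (fun w hw hne => ihn w hw hne)

/-- Fort-based lower bound: a zero forcing set meets every fort. -/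
lemma fort_meets (F : Set V) (hne : F.Nonempty)
    (hfort : ∀ v ∉ F, ∀ u ∈ F, G.Adj v u → ∃ u' ∈ F, u' ≠ u ∧ G.Adj v u')
    (hB : zfClosure G ∅ B = Set.univ) : (B ∩ F).Nonempty := by
  by_contra hBF
  rw [Set.not_nonempty_iff_eq_empty] at hBF
  have key : ∀ k, (zfStep G ∅)^[k] B ∩ F = ∅ := by
    intro k
    induction k with
    | zero => exact hBF
    | succ k ih =>
      rw [Function.iterate_succ_apply']
      rw [Set.eq_empty_iff_forall_notMem] at ih ⊢
      rintro v ⟨hv, hvF⟩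
      rcases hv with hv | ⟨u, huS, _, hadj, huniq⟩
      · exact ih v ⟨hv, hvF⟩
      · have huF : u ∉ F := fun hc => ih u ⟨huS, hc⟩
        obtain ⟨u', hu'F, hu'ne, hu'adj⟩ := hfort u huF v hvF hadj
        have hu'S : u' ∉ (zfStep G ∅)^[k] B := fun hc => ih u' ⟨hc, hu'F⟩
        exact hu'ne (huniq u' hu'adj hu'S)
  obtain ⟨x, hxF⟩ := hne
  have hx : x ∈ zfClosure G ∅ B := hB ▸ Set.mem_univ x
  obtain ⟨k, hk⟩ := mem_zfClosure_iff.mp hx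
  have := key k
  rw [Set.eq_empty_iff_forall_notMem] at this
  exact this x ⟨hk, hxF⟩

end Generic
section HDlemmas

variable {m n : ℕ}

lemma mem_HDverts {p : ℤ × ℤ} :
    p ∈ HDverts m n ↔ ((m:ℤ) - 1 ≤ p.1 + p.2 ∧ p.1 + p.2 ≤ 2*n + m - 1 ∧
      -(m:ℤ) ≤ p.1 - p.2 ∧ p.1 - p.2 ≤ m) := by
  simp only [HDverts, Finset.mem_filter, Finset.mem_product, Finset.mem_Icc, abs_le]
  constructor
  · rintro ⟨⟨⟨h1, h2⟩, h3, h4⟩, h5, h6, h7, h8⟩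
    exact ⟨h5, h6, h7, h8⟩
  · rintro ⟨h5, h6, h7, h8⟩
    refine ⟨⟨⟨?_, ?_⟩, ?_, ?_⟩, h5, h6, h7, h8⟩ <;> omega

lemma mem_HDverts' {i j : ℤ} :
    (i, j) ∈ HDverts m n ↔ ((m:ℤ) - 1 ≤ i + j ∧ i + j ≤ 2*n + m - 1 ∧
      -(m:ℤ) ≤ i - j ∧ i - j ≤ m) := mem_HDverts

lemma HD_adj_iff {u v : {p : ℤ × ℤ // p ∈ HDverts m n}} :
    (HD m n).Adj u v ↔ |u.val.1 - v.val.1| + |u.val.2 - v.val.2| = 1 := Iff.rfl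

lemma abs_adj_cases {x1 y1 x2 y2 : ℤ} (h : |x1 - x2| + |y1 - y2| = 1) :
    (x2 = x1 + 1 ∧ y2 = y1) ∨ (x2 = x1 - 1 ∧ y2 = y1) ∨
    (x2 = x1 ∧ y2 = y1 + 1) ∨ (x2 = x1 ∧ y2 = y1 - 1) := by
  rcases abs_cases (x1 - x2) with ⟨h1, _⟩ | ⟨h1, _⟩ <;>
    rcases abs_cases (y1 - y2) with ⟨h2, _⟩ | ⟨h2, _⟩ <;> omega

lemma abs_adj_mk {x1 y1 x2 y2 : ℤ}
    (h : (x2 = x1 + 1 ∧ y2 = y1) ∨ (x2 = x1 - 1 ∧ y2 = y1) ∨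
    (x2 = x1 ∧ y2 = y1 + 1) ∨ (x2 = x1 ∧ y2 = y1 - 1)) :
    |x1 - x2| + |y1 - y2| = 1 := by
  rcases h with ⟨h1, h2⟩ | ⟨h1, h2⟩ | ⟨h1, h2⟩ | ⟨h1, h2⟩ <;> subst h1 <;> subst h2 <;>
    simp [abs_of_nonneg, abs_of_nonpos]

/-- The canonical forcing set: the left endpoint of each horizontal row. -/
noncomputable def gB (m n : ℕ) (k : Fin (m + n)) : {p : ℤ × ℤ // p ∈ HDverts m n} :=
  ⟨(max ((m:ℤ) - 1 - k) ((k:ℤ) - m), (k:ℤ)), by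
    rw [mem_HDverts']
    have : (k:ℕ) < m + n := k.2
    omega⟩

noncomputable def B0 (m n : ℕ) : Set {p : ℤ × ℤ // p ∈ HDverts m n} := Set.range (gB m n)

lemma gB_injective : Function.Injective (gB m n) := by
  intro k k' h
  have h2 : ((k:ℕ) : ℤ) = ((k':ℕ) : ℤ) := congrArg (fun v => v.val.2) h
  have : (k:ℕ) = (k':ℕ) := by exact_mod_cast h2
  exact Fin.ext this

lemma ncard_B0 : (B0 m n).ncard = m + n := by
  rw [B0, ← Nat.card_coe_set_eq, Nat.card_range_of_injective gB_injective]
  simp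

/-- Coordinate version of the Forced predicate. -/
def Fd (m n : ℕ) (L : Set {p : ℤ × ℤ // p ∈ HDverts m n}) (i j : ℤ) : Prop :=
  ∀ h : (i, j) ∈ HDverts m n, Forced (HD m n) L (B0 m n) ⟨(i, j), h⟩

/-- Left endpoints of rows are in `B0`, hence forced. -/
lemma Fd_base {L : Set {p : ℤ × ℤ // p ∈ HDverts m n}} {i j : ℤ}
    (hij : i = max ((m:ℤ) - 1 - j) (j - m)) : Fd m n L i j := by
  intro h
  have hmem := mem_HDverts'.mp h
  have hj0 : 0 ≤ j := by omega
  have hjlt : j.toNat < m + n := by omega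
  refine Forced.base ⟨⟨j.toNat, hjlt⟩, ?_⟩
  apply Subtype.ext
  have hjc : ((j.toNat : ℕ) : ℤ) = j := Int.toNat_of_nonneg hj0
  simp only [gB, hjc]
  rw [Prod.ext_iff]
  constructor
  · simp only []; omega
  · simp only []

/-- Generic single-force step in coordinates: `u = (ui,uj)` forces `v = (vi,vj)`. -/
lemma Fd_step {L : Set {p : ℤ × ℤ // p ∈ HDverts m n}} {ui uj vi vj : ℤ}
    (hu : (ui, uj) ∈ HDverts m n)
    (hadj : |ui - vi| + |uj - vj| = 1)
    (hL : (⟨(ui, uj), hu⟩ : {p : ℤ × ℤ // p ∈ HDverts m n}) ∉ L)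
    (hfu : Fd m n L ui uj)
    (h1 : (vi, vj) = (ui + 1, uj) ∨ Fd m n L (ui + 1) uj)
    (h2 : (vi, vj) = (ui - 1, uj) ∨ Fd m n L (ui - 1) uj)
    (h3 : (vi, vj) = (ui, uj + 1) ∨ Fd m n L ui (uj + 1))
    (h4 : (vi, vj) = (ui, uj - 1) ∨ Fd m n L ui (uj - 1)) :
    Fd m n L vi vj := by
  intro hv
  have hvaldis : ((vi, vj) : ℤ × ℤ) ≠ (ui, uj) := by
    intro hc
    rw [Prod.ext_iff] at hc
    simp only [] at hc
    obtain ⟨e1, e2⟩ := hc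
    subst e1; subst e2
    simp at hadj
  refine Forced.force (u := ⟨(ui, uj), hu⟩) (hfu hu) hL (HD_adj_iff.mpr hadj) ?_
  rintro ⟨⟨w1, w2⟩, hwmem⟩ hw hwne
  have hwadj : |ui - w1| + |uj - w2| = 1 := hw
  have hwne' : (w1, w2) ≠ (vi, vj) := by
    intro hc; exact hwne (Subtype.ext hc)
  rcases abs_adj_cases hwadj with ⟨e1, e2⟩ | ⟨e1, e2⟩ | ⟨e1, e2⟩ | ⟨e1, e2⟩ <;>
    subst e1 <;> subst e2
  · rcases h1 with he | hf
    · exact absurd he.symm hwne'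
    · exact hf hwmem
  · rcases h2 with he | hf
    · exact absurd he.symm hwne'
    · exact hf hwmem
  · rcases h3 with he | hf
    · exact absurd he.symm hwne'
    · exact hf hwmem
  · rcases h4 with he | hf
    · exact absurd he.symm hwne'
    · exact hf hwmem

lemma not_mem_leak {a b ui uj : ℤ} {hab : (a, b) ∈ HDverts m n}
    (hu : (ui, uj) ∈ HDverts m n) (hne : ¬(ui = a ∧ uj = b)) :
    (⟨(ui, uj), hu⟩ : {p : ℤ × ℤ // p ∈ HDverts m n}) ∉
      ({⟨(a, b), hab⟩} : Set {p : ℤ × ℤ // p ∈ HDverts m n}) := by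
  intro hc
  apply hne
  have h2 := congrArg Subtype.val hc
  rw [Prod.ext_iff] at h2
  exact ⟨h2.1, h2.2⟩

end HDlemmas
section ForcingProof

variable {m n : ℕ} {a b : ℤ}

/-- Left row-endpoint is strictly below the cone. -/
lemma cone_gt_lo (hab : (a, b) ∈ HDverts m n) (j : ℤ) :
    max ((m:ℤ) - 1 - j) (j - m) < a + 1 + max (j - b) (b - j) := by
  have h := mem_HDverts'.mp hab
  omega

/-- Phase 1: everything strictly left of the cone is forced (forward sweep). -/
lemma P1 (hab : (a, b) ∈ HDverts m n) :
    ∀ k : ℕ, ∀ i j : ℤ, (i, j) ∈ HDverts m n → i < a + 1 + max (j - b) (b - j) →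
      i.toNat ≤ k → Fd m n {⟨(a, b), hab⟩} i j := by
  intro k
  induction k with
  | zero =>
    intro i j hmem hc hk
    have hm' := mem_HDverts'.mp hmem
    have : i = max ((m:ℤ) - 1 - j) (j - m) := by omega
    exact Fd_base this
  | succ k ih =>
    intro i j hmem hc hk
    have hm' := mem_HDverts'.mp hmem
    by_cases hbase : i = max ((m:ℤ) - 1 - j) (j - m)
    · exact Fd_base hbase
    · have hlo : max ((m:ℤ) - 1 - j) (j - m) < i := by omega
      have humem : (i - 1, j) ∈ HDverts m n := by
        rw [mem_HDverts'] at *; omega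
      refine Fd_step humem (abs_adj_mk (Or.inl ⟨by ring, rfl⟩))
        (not_mem_leak humem ?_) ?_ (Or.inl (by norm_num)) (Or.inr ?_) (Or.inr ?_) (Or.inr ?_)
      · -- (i-1, j) ≠ (a, b)
        rintro ⟨rfl, rfl⟩; omega
      · -- u itself forced
        exact ih (i-1) j humem (by omega) (by omega)
      · -- (i-2, j)
        intro hmem2
        have h2 := mem_HDverts'.mp hmem2
        exact ih (i-1-1) j hmem2 (by omega) (by omega) hmem2
      · -- (i-1, j+1)
        intro hmem3
        have h3 := mem_HDverts'.mp hmem3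
        exact ih (i-1) (j+1) hmem3 (by omega) (by omega) hmem3
      · -- (i-1, j-1)
        intro hmem4
        have h4 := mem_HDverts'.mp hmem4
        exact ih (i-1) (j-1) hmem4 (by omega) (by omega) hmem4

lemma Fd_W (hab : (a, b) ∈ HDverts m n) {i j : ℤ} (hmem : (i, j) ∈ HDverts m n)
    (hc : i < a + 1 + max (j - b) (b - j)) : Fd m n {⟨(a, b), hab⟩} i j :=
  P1 hab i.toNat i j hmem hc le_rfl

/-- Down-recovery chain: when `(a+b+m)` is odd, the upper-left boundary cells of
the cone are forced from above, by downward induction on rows from the top. -/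
lemma chainD (hab : (a, b) ∈ HDverts m n) (hpar : (a + b + m) % 2 = 1) :
    ∀ k : ℕ, ∀ j c : ℤ, b ≤ j → c = a + 1 + (j - b) → (c, j) ∈ HDverts m n →
      ((m:ℤ) + n - 1 - j).toNat ≤ k → Fd m n {⟨(a, b), hab⟩} c j := by
  intro k
  induction k with
  | zero =>
    intro j c hbj hceq hmem hk
    exfalso
    have hm' := mem_HDverts'.mp hmem
    have hab' := mem_HDverts'.mp hab
    have hgt := cone_gt_lo hab j
    -- j = m+n-1 forced, then the chain cell touches the right boundary: parity contra
    omega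
  | succ k ih =>
    intro j c hbj hceq hmem hk
    have hm' := mem_HDverts'.mp hmem
    have hab' := mem_HDverts'.mp hab
    have hgt := cone_gt_lo hab j
    have humem : (c, j + 1) ∈ HDverts m n := by
      rw [mem_HDverts']; omega
    refine Fd_step humem (abs_adj_mk (Or.inr (Or.inr (Or.inr ⟨rfl, by ring⟩))))
      (not_mem_leak humem ?_) ?_ (Or.inr ?_) (Or.inr ?_) (Or.inr ?_) (Or.inl (by norm_num))
    · -- (c, j+1) ≠ (a, b)
      rintro ⟨rfl, rfl⟩; omega
    · -- u = (c, j+1) is strictly left of cone in row j+1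
      exact Fd_W hab humem (by omega)
    · -- (c+1, j+1) : chain cell of row j+1
      intro hmem2
      exact ih (j+1) (c+1) (by omega) (by omega) hmem2 (by omega) hmem2
    · -- (c-1, j+1)
      intro hmem3
      exact Fd_W hab hmem3 (by omega) hmem3
    · -- (c, j+2)
      intro hmem4
      exact Fd_W hab hmem4 (by omega) hmem4

/-- Up-recovery chain: when `(a+b+m)` is even, the lower-left boundary cells of
the cone are forced from below, by induction on rows from the bottom. -/
lemma chainU (hab : (a, b) ∈ HDverts m n) (hpar : (a + b + m) % 2 = 0) :
    ∀ k : ℕ, ∀ j c : ℤ, j ≤ b → c = a + 1 + (b - j) → (c, j) ∈ HDverts m n →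
      j.toNat ≤ k → Fd m n {⟨(a, b), hab⟩} c j := by
  intro k
  induction k with
  | zero =>
    intro j c hbj hceq hmem hk
    exfalso
    have hm' := mem_HDverts'.mp hmem
    have hab' := mem_HDverts'.mp hab
    have hgt := cone_gt_lo hab j
    omega
  | succ k ih =>
    intro j c hbj hceq hmem hk
    have hm' := mem_HDverts'.mp hmem
    have hab' := mem_HDverts'.mp hab
    have hgt := cone_gt_lo hab j
    have humem : (c, j - 1) ∈ HDverts m n := by
      rw [mem_HDverts']; omega
    refine Fd_step humem (abs_adj_mk (Or.inr (Or.inr (Or.inl ⟨rfl, by ring⟩))))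
      (not_mem_leak humem ?_) ?_ (Or.inr ?_) (Or.inr ?_) (Or.inl (by norm_num)) (Or.inr ?_)
    · rintro ⟨rfl, rfl⟩; omega
    · exact Fd_W hab humem (by omega)
    · -- (c+1, j-1) : chain cell of row j-1
      intro hmem2
      exact ih (j-1) (c+1) (by omega) (by omega) hmem2 (by omega) hmem2
    · -- (c-1, j-1)
      intro hmem3
      exact Fd_W hab hmem3 (by omega) hmem3
    · -- (c, j-2)
      intro hmem4
      exact Fd_W hab hmem4 (by omega) hmem4

/-- Phase 2 (down case): the whole cone is forced. -/
lemma P2D (hab : (a, b) ∈ HDverts m n) (hpar : (a + b + m) % 2 = 1) :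
    ∀ k : ℕ, ∀ i j : ℤ, (i, j) ∈ HDverts m n → a + 1 + max (j - b) (b - j) ≤ i →
      i.toNat ≤ k → Fd m n {⟨(a, b), hab⟩} i j := by
  intro k
  induction k with
  | zero =>
    intro i j hmem hc hk
    exfalso
    have hm' := mem_HDverts'.mp hmem
    have hgt := cone_gt_lo hab j
    omega
  | succ k ih =>
    intro i j hmem hc hk
    have hm' := mem_HDverts'.mp hmem
    have hgt := cone_gt_lo hab j
    have hcover : ∀ i' j' : ℤ, (i', j') ∈ HDverts m n → i'.toNat ≤ k →
        Fd m n {⟨(a, b), hab⟩} i' j' := by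
      intro i' j' hmem' hk'
      by_cases h : i' < a + 1 + max (j' - b) (b - j')
      · exact Fd_W hab hmem' h
      · exact ih i' j' hmem' (by omega) hk'
    by_cases hch : b ≤ j ∧ i = a + 1 + (j - b)
    · exact chainD hab hpar ((m:ℤ) + n - 1 - j).toNat j i hch.1 hch.2 hmem le_rfl
    · have humem : (i - 1, j) ∈ HDverts m n := by
        rw [mem_HDverts'] at *; omega
      have hum' := mem_HDverts'.mp humem
      refine Fd_step humem (abs_adj_mk (Or.inl ⟨by ring, rfl⟩))
        (not_mem_leak humem ?_) ?_ (Or.inl (by norm_num)) (Or.inr ?_) (Or.inr ?_) (Or.inr ?_)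
      · rintro ⟨rfl, rfl⟩; omega
      · exact hcover (i-1) j humem (by omega)
      · intro hmem2
        have h2 := mem_HDverts'.mp hmem2
        exact hcover (i-1-1) j hmem2 (by omega) hmem2
      · intro hmem3
        have h3 := mem_HDverts'.mp hmem3
        exact hcover (i-1) (j+1) hmem3 (by omega) hmem3
      · intro hmem4
        have h4 := mem_HDverts'.mp hmem4
        exact hcover (i-1) (j-1) hmem4 (by omega) hmem4

/-- Phase 2 (up case): the whole cone is forced. -/
lemma P2U (hab : (a, b) ∈ HDverts m n) (hpar : (a + b + m) % 2 = 0) :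
    ∀ k : ℕ, ∀ i j : ℤ, (i, j) ∈ HDverts m n → a + 1 + max (j - b) (b - j) ≤ i →
      i.toNat ≤ k → Fd m n {⟨(a, b), hab⟩} i j := by
  intro k
  induction k with
  | zero =>
    intro i j hmem hc hk
    exfalso
    have hm' := mem_HDverts'.mp hmem
    have hgt := cone_gt_lo hab j
    omega
  | succ k ih =>
    intro i j hmem hc hk
    have hm' := mem_HDverts'.mp hmem
    have hgt := cone_gt_lo hab j
    have hcover : ∀ i' j' : ℤ, (i', j') ∈ HDverts m n → i'.toNat ≤ k →
        Fd m n {⟨(a, b), hab⟩} i' j' := by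
      intro i' j' hmem' hk'
      by_cases h : i' < a + 1 + max (j' - b) (b - j')
      · exact Fd_W hab hmem' h
      · exact ih i' j' hmem' (by omega) hk'
    by_cases hch : j ≤ b ∧ i = a + 1 + (b - j)
    · exact chainU hab hpar j.toNat j i hch.1 hch.2 hmem le_rfl
    · have humem : (i - 1, j) ∈ HDverts m n := by
        rw [mem_HDverts'] at *; omega
      have hum' := mem_HDverts'.mp humem
      refine Fd_step humem (abs_adj_mk (Or.inl ⟨by ring, rfl⟩))
        (not_mem_leak humem ?_) ?_ (Or.inl (by norm_num)) (Or.inr ?_) (Or.inr ?_) (Or.inr ?_)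
      · rintro ⟨rfl, rfl⟩; omega
      · exact hcover (i-1) j humem (by omega)
      · intro hmem2
        have h2 := mem_HDverts'.mp hmem2
        exact hcover (i-1-1) j hmem2 (by omega) hmem2
      · intro hmem3
        have h3 := mem_HDverts'.mp hmem3
        exact hcover (i-1) (j+1) hmem3 (by omega) hmem3
      · intro hmem4
        have h4 := mem_HDverts'.mp hmem4
        exact hcover (i-1) (j-1) hmem4 (by omega) hmem4

/-- Every vertex is forced, whatever the single leak is. -/
lemma forced_all (hab : (a, b) ∈ HDverts m n)
    (v : {p : ℤ × ℤ // p ∈ HDverts m n}) :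
    Forced (HD m n) {⟨(a, b), hab⟩} (B0 m n) v := by
  obtain ⟨⟨i, j⟩, hv⟩ := v
  rcases lt_or_ge i (a + 1 + max (j - b) (b - j)) with h | h
  · exact Fd_W hab hv h hv
  · rcases Int.emod_two_eq (a + b + m) with hpar | hpar
    · exact P2U hab hpar i.toNat i j hv h le_rfl hv
    · exact P2D hab hpar i.toNat i j hv h le_rfl hv

end ForcingProof
section Forts

variable {m n : ℕ}

/-- Anti-diagonal forts `{i+j = c}` for `c ≡ m (mod 2)`, `m ≤ c ≤ 2n+m-2`. -/
lemma fortA_prop (c : ℤ) (hc1 : (m:ℤ) ≤ c) (hc2 : c ≤ 2*n + m - 2) (hc3 : (c - m) % 2 = 0) :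
    ∀ v ∉ {v : {p : ℤ × ℤ // p ∈ HDverts m n} | v.val.1 + v.val.2 = c},
    ∀ u ∈ {v : {p : ℤ × ℤ // p ∈ HDverts m n} | v.val.1 + v.val.2 = c},
      (HD m n).Adj v u → ∃ u' ∈ {v : {p : ℤ × ℤ // p ∈ HDverts m n} | v.val.1 + v.val.2 = c},
        u' ≠ u ∧ (HD m n).Adj v u' := by
  rintro ⟨⟨v1, v2⟩, hv⟩ hvF ⟨⟨u1, u2⟩, hu⟩ huF hadj
  simp only [Set.mem_setOf_eq] at hvF huF
  have hv' := mem_HDverts'.mp hv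
  have hadj' : |v1 - u1| + |v2 - u2| = 1 := hadj
  rcases abs_adj_cases hadj' with ⟨e1, e2⟩ | ⟨e1, e2⟩ | ⟨e1, e2⟩ | ⟨e1, e2⟩
  · -- u = (v1+1, v2), take u' = (v1, v2+1)
    refine ⟨⟨(v1, v2 + 1), by rw [mem_HDverts']; omega⟩, by simp only [Set.mem_setOf_eq]; omega,
      ?_, abs_adj_mk (Or.inr (Or.inr (Or.inl ⟨rfl, rfl⟩)))⟩
    intro hc; have := congrArg (fun x => x.val.1) hc; simp at this; omega
  · refine ⟨⟨(v1, v2 - 1), by rw [mem_HDverts']; omega⟩, by simp only [Set.mem_setOf_eq]; omega,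
      ?_, abs_adj_mk (Or.inr (Or.inr (Or.inr ⟨rfl, rfl⟩)))⟩
    intro hc; have := congrArg (fun x => x.val.1) hc; simp at this; omega
  · refine ⟨⟨(v1 + 1, v2), by rw [mem_HDverts']; omega⟩, by simp only [Set.mem_setOf_eq]; omega,
      ?_, abs_adj_mk (Or.inl ⟨rfl, rfl⟩)⟩
    intro hc; have := congrArg (fun x => x.val.2) hc; simp at this; omega
  · refine ⟨⟨(v1 - 1, v2), by rw [mem_HDverts']; omega⟩, by simp only [Set.mem_setOf_eq]; omega,
      ?_, abs_adj_mk (Or.inr (Or.inl ⟨rfl, rfl⟩))⟩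
    intro hc; have := congrArg (fun x => x.val.2) hc; simp at this; omega

/-- Diagonal forts `{i-j = c}` for `c ≡ m-1 (mod 2)`, `|c| ≤ m-1`. -/
lemma fortB_prop (c : ℤ) (hc1 : -((m:ℤ) - 1) ≤ c) (hc2 : c ≤ m - 1) (hc3 : (c - (m - 1)) % 2 = 0) :
    ∀ v ∉ {v : {p : ℤ × ℤ // p ∈ HDverts m n} | v.val.1 - v.val.2 = c},
    ∀ u ∈ {v : {p : ℤ × ℤ // p ∈ HDverts m n} | v.val.1 - v.val.2 = c},
      (HD m n).Adj v u → ∃ u' ∈ {v : {p : ℤ × ℤ // p ∈ HDverts m n} | v.val.1 - v.val.2 = c},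
        u' ≠ u ∧ (HD m n).Adj v u' := by
  rintro ⟨⟨v1, v2⟩, hv⟩ hvF ⟨⟨u1, u2⟩, hu⟩ huF hadj
  simp only [Set.mem_setOf_eq] at hvF huF
  have hv' := mem_HDverts'.mp hv
  have hadj' : |v1 - u1| + |v2 - u2| = 1 := hadj
  rcases abs_adj_cases hadj' with ⟨e1, e2⟩ | ⟨e1, e2⟩ | ⟨e1, e2⟩ | ⟨e1, e2⟩
  · -- u = (v1+1, v2) has diff v1-v2+1 = c, take u' = (v1, v2-1)
    refine ⟨⟨(v1, v2 - 1), by rw [mem_HDverts']; omega⟩, by simp only [Set.mem_setOf_eq]; omega,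
      ?_, abs_adj_mk (Or.inr (Or.inr (Or.inr ⟨rfl, rfl⟩)))⟩
    intro hc; have := congrArg (fun x => x.val.1) hc; simp at this; omega
  · refine ⟨⟨(v1, v2 + 1), by rw [mem_HDverts']; omega⟩, by simp only [Set.mem_setOf_eq]; omega,
      ?_, abs_adj_mk (Or.inr (Or.inr (Or.inl ⟨rfl, rfl⟩)))⟩
    intro hc; have := congrArg (fun x => x.val.1) hc; simp at this; omega
  · refine ⟨⟨(v1 - 1, v2), by rw [mem_HDverts']; omega⟩, by simp only [Set.mem_setOf_eq]; omega,
      ?_, abs_adj_mk (Or.inr (Or.inl ⟨rfl, rfl⟩))⟩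
    intro hc; have := congrArg (fun x => x.val.2) hc; simp at this; omega
  · refine ⟨⟨(v1 + 1, v2), by rw [mem_HDverts']; omega⟩, by simp only [Set.mem_setOf_eq]; omega,
      ?_, abs_adj_mk (Or.inl ⟨rfl, rfl⟩)⟩
    intro hc; have := congrArg (fun x => x.val.2) hc; simp at this; omega

/-- The fort family indexed by `Fin (m+n)`. -/
def fortF (m n : ℕ) (k : Fin (m + n)) : Set {p : ℤ × ℤ // p ∈ HDverts m n} :=
  if (k : ℕ) < n then {v | v.val.1 + v.val.2 = (m:ℤ) + 2 * (k : ℕ)}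
  else {v | v.val.1 - v.val.2 = -((m:ℤ) - 1) + 2 * ((k : ℕ) - n : ℕ)}

lemma zf_lower (hm : 0 < m) (hn : 0 < n) (B : Set {p : ℤ × ℤ // p ∈ HDverts m n})
    (hB : IsZeroForcingSet (HD m n) B) : m + n ≤ B.ncard := by
  classical
  have hmeet : ∀ k : Fin (m + n), (B ∩ fortF m n k).Nonempty := by
    intro k
    by_cases hk : (k : ℕ) < n
    · refine fort_meets (fortF m n k) ?_ ?_ hB
      · refine ⟨⟨((m:ℤ) + (k:ℕ), (k:ℕ)), by rw [mem_HDverts']; omega⟩, ?_⟩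
        simp only [fortF, if_pos hk, Set.mem_setOf_eq]; omega
      · simp only [fortF, if_pos hk]
        exact fortA_prop ((m:ℤ) + 2 * (k:ℕ)) (by omega) (by omega) (by omega)
    · have hkn : (k : ℕ) - n < m := by have := k.2; omega
      refine fort_meets (fortF m n k) ?_ ?_ hB
      · refine ⟨⟨((((k:ℕ) - n : ℕ) : ℤ), (m:ℤ) - 1 - (((k:ℕ) - n : ℕ) : ℤ)),
          by rw [mem_HDverts']; omega⟩, ?_⟩
        simp only [fortF, if_neg hk, Set.mem_setOf_eq]; omega
      · simp only [fortF, if_neg hk]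
        exact fortB_prop (-((m:ℤ) - 1) + 2 * ((k:ℕ) - n : ℕ)) (by omega) (by omega) (by omega)
  choose f hfB hfF using fun k => hmeet k
  have hinj : Function.Injective f := by
    intro k k' heq
    have hF : f k ∈ fortF m n k := hfF k
    have hF' : f k ∈ fortF m n k' := heq ▸ hfF k'
    by_contra hne
    obtain ⟨⟨x1, x2⟩, hx⟩ := f k
    simp only [fortF] at hF hF'
    by_cases h1 : (k : ℕ) < n <;> by_cases h2 : (k' : ℕ) < n <;>
      simp only [if_pos, if_neg, h1, h2, Set.mem_setOf_eq, if_true, if_false] at hF hF'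
    · exact hne (Fin.ext (by omega))
    · omega
    · omega
    · have hk2 := k.2; have hk'2 := k'.2
      exact hne (Fin.ext (by omega))
  have hsub : Set.range f ⊆ B := by rintro _ ⟨k, rfl⟩; exact hfB k
  calc m + n = (Set.range f).ncard := by
        rw [← Nat.card_coe_set_eq, Nat.card_range_of_injective hinj]; simp
    _ ≤ B.ncard := Set.ncard_le_ncard hsub (Set.toFinite B)

end Forts
/-- The zero forcing number and the `1`-leaky forcing number of `HD(m,n)` are
equal, and both equal `m + n`. -/
theorem zfNumber_eq_one_leaky_HD (m n : ℕ) (hm : 0 < m) (hn : 0 < n) :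
    zfNumber (HD m n) = m + n ∧ leakyNumber (HD m n) 1 = m + n := by
  classical
  have hleaky : IsLeakyForcingSet (HD m n) 1 (B0 m n) := by
    intro L hL
    rcases (Set.ncard_le_one_iff_eq (hs := L.toFinite)).mp hL with rfl | ⟨ℓ, rfl⟩
    · have hab : ((m:ℤ) - 1, 0) ∈ HDverts m n := by rw [mem_HDverts']; omega
      apply zfClosure_eq_univ_of_forced
      intro v
      exact Forced.anti (Set.empty_subset _) (forced_all hab v)
    · obtain ⟨⟨a, b⟩, hab⟩ := ℓ
      apply zfClosure_eq_univ_of_forced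
      intro v
      exact forced_all hab v
  have hzf : IsZeroForcingSet (HD m n) (B0 m n) := hleaky ∅ (by simp)
  constructor
  · apply le_antisymm
    · exact Nat.sInf_le ⟨B0 m n, hzf, ncard_B0⟩
    · refine le_csInf ⟨m + n, B0 m n, hzf, ncard_B0⟩ ?_
      rintro x ⟨B, hB, rfl⟩
      exact zf_lower hm hn B hB
  · apply le_antisymm
    · exact Nat.sInf_le ⟨B0 m n, hleaky, ncard_B0⟩
    · refine le_csInf ⟨m + n, B0 m n, hleaky, ncard_B0⟩ ?_
      rintro x ⟨B, hB, rfl⟩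
      exact zf_lower hm hn B (hB ∅ (by simp))
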